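/- Let K be an n×n real symmetric positive semidefinite matrix partitioned into blocks A (m×m), B (m×(n-m)), Bᵀ, C ((n-m)×(n-m)), and suppose A is invertible. If rank K = rank A = m, then C = Bᵀ A⁻¹ B (the Nyström approximation is exact). -/

import Mathlib

open Matrix

section Aux

variable {m l : ℕ}

/-- `mulVecLin` of a block diagonal matrix is conjugate to a `prodMap`. -/
lemma mulVecLin_fromBlocks_diag (A : Matrix (Fin m) (Fin m) ℝ)
    (S : Matrix (Fin l) (Fin l) ℝ) :
    (Matrix.fromBlocks A 0 0 S).mulVecLin =
      (LinearEquiv.sumArrowLequivProdArrow (Fin m) (Fin l) ℝ ℝ).symm.toLinearMap ∘ₗ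
        (A.mulVecLin.prodMap S.mulVecLin) ∘ₗ
        (LinearEquiv.sumArrowLequivProdArrow (Fin m) (Fin l) ℝ ℝ).toLinearMap := by
  refine LinearMap.ext fun x => ?_
  funext i
  cases i <;>
    simp [Matrix.fromBlocks_mulVec, LinearEquiv.sumArrowLequivProdArrow,
      Equiv.sumArrowEquivProdArrow]

lemma rank_fromBlocks_diag (A : Matrix (Fin m) (Fin m) ℝ)
    (S : Matrix (Fin l) (Fin l) ℝ) (hA : IsUnit A.det) :
    (Matrix.fromBlocks A 0 0 S).rank = m + S.rank := by
  classical
  set e := LinearEquiv.sumArrowLequivProdArrow (Fin m) (Fin l) ℝ ℝ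
  have hkerA : LinearMap.ker A.mulVecLin = ⊥ := by
    rw [LinearMap.ker_eq_bot]
    intro x y hxy
    have : A⁻¹ *ᵥ (A *ᵥ x) = A⁻¹ *ᵥ (A *ᵥ y) := by
      simpa [Matrix.mulVecLin_apply] using congrArg (fun v => A⁻¹ *ᵥ v) hxy
    simpa [Matrix.mulVec_mulVec, Matrix.nonsing_inv_mul _ hA] using this
  have hker : LinearMap.ker (Matrix.fromBlocks A 0 0 S).mulVecLin =
      Submodule.comap e.toLinearMap
        (Submodule.map (LinearMap.inr ℝ (Fin m → ℝ) (Fin l → ℝ))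
          (LinearMap.ker S.mulVecLin)) := by
    rw [mulVecLin_fromBlocks_diag, LinearMap.ker_comp, LinearEquiv.ker,
      Submodule.comap_bot, LinearMap.ker_comp, LinearMap.ker_prodMap, hkerA,
      ← Submodule.map_inr]
  have hfin : Module.finrank ℝ (LinearMap.ker (Matrix.fromBlocks A 0 0 S).mulVecLin)
      = Module.finrank ℝ (LinearMap.ker S.mulVecLin) := by
    rw [hker, Submodule.comap_equiv_eq_map_symm]
    rw [LinearEquiv.finrank_map_eq]
    exact (Submodule.equivMapOfInjective _
      (LinearMap.inr_injective) (LinearMap.ker S.mulVecLin)).symm.finrank_eq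
  have h1 := LinearMap.finrank_range_add_finrank_ker
    (Matrix.fromBlocks A 0 0 S).mulVecLin
  have h2 := LinearMap.finrank_range_add_finrank_ker S.mulVecLin
  rw [hfin] at h1
  have hdim1 : Module.finrank ℝ ((Fin m ⊕ Fin l) → ℝ) = m + l := by simp
  have hdim2 : Module.finrank ℝ (Fin l → ℝ) = l := by simp
  rw [hdim1] at h1
  rw [hdim2] at h2
  have e1 : (Matrix.fromBlocks A 0 0 S).rank
      = Module.finrank ℝ (LinearMap.range (Matrix.fromBlocks A 0 0 S).mulVecLin) := rfl
  have e2 : S.rank = Module.finrank ℝ (LinearMap.range S.mulVecLin) := rfl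
  omega

lemma rank_zero_eq_zero {l : ℕ} (S : Matrix (Fin l) (Fin l) ℝ) (h : S.rank = 0) :
    S = 0 := by
  have : LinearMap.range S.mulVecLin = ⊥ := by
    have := Submodule.finrank_eq_zero (R := ℝ) (M := (Fin l) → ℝ)
      (S := LinearMap.range S.mulVecLin)
    rw [← this]
    exact h
  have hmv : ∀ x, S *ᵥ x = 0 := by
    intro x
    have : S.mulVecLin x ∈ (⊥ : Submodule ℝ (Fin l → ℝ)) := this ▸ LinearMap.mem_range_self _ x
    simpa [Matrix.mulVecLin_apply] using this
  ext i j
  have := congrFun (hmv (Pi.single j 1)) i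
  simpa [Matrix.mulVec_single] using this

end Aux

/-- Exactness of the Nyström approximation: if the positive semidefinite matrix
`K = [[A, B], [Bᵀ, C]]` has `A` invertible and `rank K = m`, then
`C = Bᵀ A⁻¹ B`. -/
theorem stmt_11 (m l : ℕ) (A : Matrix (Fin m) (Fin m) ℝ)
    (B : Matrix (Fin m) (Fin l) ℝ) (C : Matrix (Fin l) (Fin l) ℝ)
    (hK : (Matrix.fromBlocks A B Bᵀ C).PosSemidef)
    (hA : IsUnit A.det)
    (hrank : (Matrix.fromBlocks A B Bᵀ C).rank = m) :
    C = Bᵀ * A⁻¹ * B := by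
  classical
  haveI := A.invertibleOfIsUnitDet hA
  -- A is positive semidefinite
  have hAsd : A.PosSemidef := by
    have h := hK.submatrix Sum.inl
    have : (Matrix.fromBlocks A B Bᵀ C).submatrix Sum.inl Sum.inl = A := by
      ext i j; simp
    rwa [this] at h
  -- A is positive definite
  have hApd : A.PosDef := by
    refine ⟨hAsd.1, fun x hx => ?_⟩
    rcases lt_or_eq_of_le (hAsd.2 x) with h | h
    · exact h
    · exfalso
      apply hx
      have h0 : A *ᵥ x = 0 := (hAsd.dotProduct_mulVec_zero_iff x).mp
        (by simpa [dotProduct, mulVec, Finsupp.sum_fintype, Finset.mul_sum, mul_assoc] using h.symm)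
      have : A⁻¹ *ᵥ (A *ᵥ x) = 0 := by rw [h0, Matrix.mulVec_zero]
      simpa [Matrix.mulVec_mulVec, Matrix.nonsing_inv_mul _ hA] using this
  -- transpose vs conjTranspose over ℝ
  have hBt : Bᵀ = Bᴴ := by ext i j; simp [Matrix.conjTranspose_apply]
  -- the Schur complement is PSD
  have hS : (C - Bᵀ * A⁻¹ * B).PosSemidef := by
    rw [hBt]
    rw [hBt] at hK
    exact (Matrix.PosDef.fromBlocks₁₁ B C hApd).mp hK
  -- LDU factorization and rank
  have hLDU := Matrix.fromBlocks_eq_of_invertible₁₁ A B Bᵀ C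
  have hinv : (⅟ A : Matrix (Fin m) (Fin m) ℝ) = A⁻¹ := Matrix.invOf_eq_nonsing_inv A
  rw [hinv] at hLDU
  set L := Matrix.fromBlocks (1 : Matrix (Fin m) (Fin m) ℝ) (0 : Matrix (Fin m) (Fin l) ℝ) (Bᵀ * A⁻¹) 1 with hL
  set U := Matrix.fromBlocks (1 : Matrix (Fin m) (Fin m) ℝ) (A⁻¹ * B) (0 : Matrix (Fin l) (Fin m) ℝ) 1 with hU
  set D := Matrix.fromBlocks A 0 0 (C - Bᵀ * A⁻¹ * B) with hD
  have hdetL : IsUnit L.det := by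
    rw [hL, Matrix.det_fromBlocks_zero₁₂]
    simp
  have hdetU : IsUnit U.det := by
    rw [hU, Matrix.det_fromBlocks_zero₂₁]
    simp
  have hrk : (Matrix.fromBlocks A B Bᵀ C).rank = D.rank := by
    rw [hLDU, Matrix.mul_assoc]
    rw [Matrix.rank_mul_eq_right_of_isUnit_det L _ hdetL,
      Matrix.rank_mul_eq_left_of_isUnit_det U _ hdetU]
  have hrkD : D.rank = m + (C - Bᵀ * A⁻¹ * B).rank :=
    rank_fromBlocks_diag A _ hA
  have hzero : (C - Bᵀ * A⁻¹ * B).rank = 0 := by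
    rw [hrk, hrkD] at hrank
    omega
  have := rank_zero_eq_zero _ hzero
  exact sub_eq_zero.mp this
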